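/- arXiv:2105.07668 — 3 statements merged into one kernel-verified Lean document; each statement's English description precedes it below -/
import Mathlib

section
/- Let μ be a probability measure on pairs of real matrices (A, B) with A of size d_x × d_x and B of size d_x × d_u, and let K be a fixed real d_u × d_x matrix. Call a pair (A, B) stabilized by K if the spectral radius of A + B·K (i.e., the maximum modulus of its complex eigenvalues) is strictly less than 1, and let p = μ{(A,B) : (A,B) is stabilized by K}. Fix ε, ε_val ∈ (0,1) and α ∈ (0,1), and let (A_1,B_1), …, (A_M,B_M) be independent samples from μ. If p < 1 − ε − ε_val and M ≥ log(1/α)/(2·ε_val²), then the probability that the empirical stability frequency (1/M)·#{i : (A_i,B_i) is stabilized by K} is at least 1 − ε is at most α. (In other words, a controller whose true stabilization probability falls below the threshold 1 − ε − ε_val passes the sample-based validation test with probability at most α.) -/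
open MeasureTheory

/-- Matrices over a measurable space of entries form a measurable space
(with the product σ-algebra, as for the underlying function type). -/
instance {m n α : Type*} [MeasurableSpace α] : MeasurableSpace (Matrix m n α) :=
  (inferInstance : MeasurableSpace (m → n → α))

/-- The pair `(A, B) = (S.1, S.2)` is stabilized by the feedback gain `K` if the
spectral radius of `A + B·K` is strictly less than `1`, i.e. every complex
eigenvalue (root of the characteristic polynomial over `ℂ`) of `A + B·K`
has modulus strictly less than `1`. -/
def StabilizedBy {dx du : ℕ} (K : Matrix (Fin du) (Fin dx) ℝ)
    (S : Matrix (Fin dx) (Fin dx) ℝ × Matrix (Fin dx) (Fin du) ℝ) : Prop :=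
  ∀ z ∈ ((S.1 + S.2 * K).map (algebraMap ℝ ℂ)).charpoly.roots, ‖z‖ < 1

lemma hoeffding_bernoulli {p : ℝ} (hp0 : 0 ≤ p) (hp1 : p ≤ 1) {t : ℝ} (ht : 0 ≤ t) :
    1 - p + p * Real.exp t ≤ Real.exp (t * p + t ^ 2 / 8) := by
  set D : ℝ → ℝ := fun s => 1 - p + p * Real.exp s with hDdef
  have hD : ∀ s, 0 < D s := by
    intro s
    have he := Real.exp_pos s
    simp only [hDdef]
    rcases lt_or_eq_of_le hp1 with h | h
    · nlinarith
    · subst h; simpa using he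
  have hDderiv : ∀ s, HasDerivAt D (p * Real.exp s) s := fun s =>
    ((Real.hasDerivAt_exp s).const_mul p).const_add (1 - p)
  -- ψ
  set ψ : ℝ → ℝ := fun s => p + s / 4 - p * Real.exp s / D s with hψdef
  have hψderiv : ∀ s, HasDerivAt ψ
      (1/4 - (p * Real.exp s * D s - p * Real.exp s * (p * Real.exp s)) / (D s) ^ 2) s := by
    intro s
    have h1 : HasDerivAt (fun s : ℝ => p + s / 4) (1/4) s := by
      simpa using ((hasDerivAt_id s).div_const 4).const_add p
    have h2 : HasDerivAt (fun s => p * Real.exp s / D s)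
        ((p * Real.exp s * D s - p * Real.exp s * (p * Real.exp s)) / (D s) ^ 2) s :=
      ((Real.hasDerivAt_exp s).const_mul p).div (hDderiv s) (hD s).ne'
    exact h1.sub h2
  have hψmono : Monotone ψ := by
    apply monotone_of_deriv_nonneg (fun s => (hψderiv s).differentiableAt)
    intro s
    rw [(hψderiv s).deriv]
    have hDs := hD s
    have he := Real.exp_pos s
    have ha : 0 ≤ p * Real.exp s := by positivity
    have hDa : p * Real.exp s ≤ D s := by simp only [hDdef]; nlinarith
    rw [sub_nonneg, div_le_iff₀ (by positivity)]
    have arith : ∀ x d : ℝ, 0 ≤ x → x ≤ d → x * d - x * x ≤ 1/4 * d ^ 2 := by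
      intro x d _ _; nlinarith [sq_nonneg (d - 2 * x)]
    have := arith (p * Real.exp s) (D s) ha hDa
    linarith
  have hψ0 : ψ 0 = 0 := by
    simp only [hψdef, hDdef, Real.exp_zero, mul_one]
    field_simp
    ring
  have hψnonneg : ∀ s, 0 ≤ s → 0 ≤ ψ s := fun s hs => hψ0 ▸ hψmono hs
  -- φ
  set φ : ℝ → ℝ := fun s => p * s + s ^ 2 / 8 - Real.log (D s) with hφdef
  have hφderiv : ∀ s, HasDerivAt φ (ψ s) s := by
    intro s
    have h1 : HasDerivAt (fun s : ℝ => p * s) p s := by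
      simpa using (hasDerivAt_id s).const_mul p
    have h2 : HasDerivAt (fun s : ℝ => s ^ 2 / 8) (2 * s ^ 1 / 8) s :=
      (hasDerivAt_pow 2 s).div_const 8
    have h3 : HasDerivAt (fun s => Real.log (D s)) (p * Real.exp s / D s) s :=
      (hDderiv s).log (hD s).ne'
    have := (h1.add h2).sub h3
    refine this.congr_deriv ?_
    show _ = p + s / 4 - p * Real.exp s / D s
    ring
  have hφmono : MonotoneOn φ (Set.Ici (0:ℝ)) := by
    apply monotoneOn_of_deriv_nonneg (convex_Ici 0)
      (fun s _ => (hφderiv s).differentiableAt.continuousAt.continuousWithinAt)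
      (fun s _ => (hφderiv s).differentiableAt.differentiableWithinAt)
    intro s hs
    rw [(hφderiv s).deriv]
    exact hψnonneg s (le_of_lt (by simpa using hs))
  have hφ0 : φ 0 = 0 := by
    simp [hφdef, hDdef]
  have := hφmono (Set.self_mem_Ici) (Set.mem_Ici.2 ht) ht
  rw [hφ0] at this
  have hlog : Real.log (D t) ≤ p * t + t ^ 2 / 8 := by
    simp only [hφdef] at this; linarith
  calc D t = Real.exp (Real.log (D t)) := (Real.exp_log (hD t)).symm
    _ ≤ Real.exp (t * p + t ^ 2 / 8) := by
        apply Real.exp_le_exp.2; linarith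

/-- If the true stabilization probability `p = μ {S | StabilizedBy K S}` is smaller than
`1 - ε - ε_val` and `M ≥ log(1/α)/(2 ε_val²)`, then the probability (over `M` i.i.d.
samples from `μ`, i.e. under the product measure) that the empirical stability frequency
is at least `1 - ε` is at most `α`. -/
theorem validation_low_stabilization_rarely_accepted {dx du : ℕ}
    (μ : Measure (Matrix (Fin dx) (Fin dx) ℝ × Matrix (Fin dx) (Fin du) ℝ))
    [IsProbabilityMeasure μ]
    (K : Matrix (Fin du) (Fin dx) ℝ)
    (ε εval α : ℝ)
    (hε : ε ∈ Set.Ioo (0 : ℝ) 1) (hεval : εval ∈ Set.Ioo (0 : ℝ) 1)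
    (hα : α ∈ Set.Ioo (0 : ℝ) 1)
    (M : ℕ)
    (hp : μ {S | StabilizedBy K S} < ENNReal.ofReal (1 - ε - εval))
    (hM : (M : ℝ) ≥ Real.log (1 / α) / (2 * εval ^ 2)) :
    (Measure.pi fun _ : Fin M => μ)
      {ω | (1 - ε : ℝ) ≤ (Nat.card {i : Fin M // StabilizedBy K (ω i)} : ℝ) / M}
      ≤ ENNReal.ofReal α := by
  classical
  obtain ⟨hε0, hε1⟩ := hε
  obtain ⟨hεv0, hεv1⟩ := hεval
  obtain ⟨hα0, hα1⟩ := hα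
  -- M > 0
  have hlog : 0 < Real.log (1 / α) := by
    apply Real.log_pos
    rw [lt_div_iff₀ hα0]; linarith
  have hMpos : 0 < (M : ℝ) := lt_of_lt_of_le (by positivity) hM
  -- positivity of 1 - ε - εval
  have hp0pos : 0 < 1 - ε - εval := by
    by_contra h
    push_neg at h
    rw [ENNReal.ofReal_eq_zero.2 h] at hp
    exact (not_lt.2 zero_le) hp
  set E := Matrix (Fin dx) (Fin dx) ℝ × Matrix (Fin dx) (Fin du) ℝ
  set Sset : Set E := {S | StabilizedBy K S} with hSset
  set T : Set E := toMeasurable μ Sset with hTdef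
  have hTm : MeasurableSet T := measurableSet_toMeasurable μ Sset
  have hST : Sset ⊆ T := subset_toMeasurable μ Sset
  have hμT : μ T = μ Sset := measure_toMeasurable Sset
  set p : ℝ := (μ T).toReal with hpdef
  have hpt : μ T ≠ ⊤ := measure_ne_top μ T
  have hplt : p < 1 - ε - εval := by
    rw [hpdef]
    rw [← ENNReal.toReal_ofReal hp0pos.le]
    exact ENNReal.toReal_strict_mono ENNReal.ofReal_ne_top (hμT ▸ hp)
  have hp0 : 0 ≤ p := ENNReal.toReal_nonneg
  have hp1 : p ≤ 1 := by
    rw [hpdef, ← ENNReal.toReal_one]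
    exact ENNReal.toReal_mono ENNReal.one_ne_top prob_le_one
  -- set up measure space structure
  letI : MeasureSpace E := ⟨μ⟩
  haveI hPv : IsProbabilityMeasure (volume : Measure E) := ‹IsProbabilityMeasure μ›
  set ν : Measure (Fin M → E) := Measure.pi fun _ : Fin M => μ with hνdef
  have hν : ν = (volume : Measure (Fin M → E)) := (volume_pi).symm
  haveI : IsProbabilityMeasure ν := Measure.pi.instIsProbabilityMeasure _
  set t : ℝ := 4 * εval with htdef
  have ht0 : 0 ≤ t := by positivity
  have het1 : 1 ≤ Real.exp t := Real.one_le_exp ht0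
  -- the one-sample function
  set g : E → ℝ := fun x => T.indicator (fun _ => Real.exp t - 1) x + 1 with hgdef
  have hg_int : Integrable g μ :=
    ((integrable_const _).indicator hTm).add (integrable_const 1)
  have hg_val : ∫ x, g x ∂μ = 1 - p + p * Real.exp t := by
    rw [hgdef]
    rw [integral_add ((integrable_const _).indicator hTm) (integrable_const 1)]
    rw [integral_indicator_const _ hTm, integral_const]
    simp only [measureReal_def, measure_univ, ENNReal.toReal_one, smul_eq_mul, one_mul, ← hpdef]
    ring
  -- the sum of indicators
  set X : (Fin M → E) → ℝ := fun ω => ∑ i, T.indicator (fun _ => (1:ℝ)) (ω i) with hXdef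
  have hkey : ∀ ω : Fin M → E, Real.exp (t * X ω) = ∏ i, g (ω i) := by
    intro ω
    rw [hXdef, Finset.mul_sum, Real.exp_sum]
    apply Finset.prod_congr rfl
    intro i _
    rw [hgdef]
    simp only [Set.indicator_apply]
    by_cases h : ω i ∈ T <;> simp [h]
  have h_int : Integrable (fun ω => Real.exp (t * X ω)) ν := by
    simp only [hkey]
    rw [hν]
    exact Integrable.fintype_prod (f := fun _ : Fin M => g) (fun _ => hg_int)
  -- mgf computation
  have hmgf : ProbabilityTheory.mgf X ν t = (1 - p + p * Real.exp t) ^ M := by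
    rw [ProbabilityTheory.mgf]
    calc ∫ ω, Real.exp (t * X ω) ∂ν = ∫ ω : Fin M → E, ∏ i, g (ω i) := by
          rw [hν]; exact integral_congr_ae (Filter.Eventually.of_forall hkey)
      _ = (∫ x, g x) ^ (Fintype.card (Fin M)) := integral_fintype_prod_eq_pow g
      _ = (1 - p + p * Real.exp t) ^ M := by
          rw [Fintype.card_fin]; exact congrArg (· ^ M) hg_val
  -- Chernoff
  have hchern := ProbabilityTheory.measure_ge_le_exp_mul_mgf (X := X) (μ := ν)
    ((M : ℝ) * (1 - ε)) ht0 h_int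
  -- event inclusion
  have hsub : {ω : Fin M → E | (1 - ε : ℝ) ≤ (Nat.card {i : Fin M // StabilizedBy K (ω i)} : ℝ) / M}
      ⊆ {ω | (M : ℝ) * (1 - ε) ≤ X ω} := by
    intro ω hω
    simp only [Set.mem_setOf_eq] at hω ⊢
    have hc : (M : ℝ) * (1 - ε) ≤ (Nat.card {i : Fin M // StabilizedBy K (ω i)} : ℝ) := by
      rw [mul_comm]
      exact (le_div_iff₀ hMpos).1 hω
    refine le_trans hc ?_
    have hcard : (Nat.card {i : Fin M // StabilizedBy K (ω i)} : ℝ)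
        = ∑ i : Fin M, if StabilizedBy K (ω i) then (1:ℝ) else 0 := by
      rw [Nat.card_eq_fintype_card, Fintype.card_subtype, Finset.sum_boole]
    rw [hcard]
    apply Finset.sum_le_sum
    intro i _
    simp only [Set.indicator_apply]
    by_cases h : StabilizedBy K (ω i)
    · simp [h, hST h]
    · simp [h]
      split <;> norm_num
  -- put it together
  refine le_trans (measure_mono hsub) ?_
  have hBnn : 0 ≤ 1 - p + p * Real.exp t := by nlinarith
  have hb : ν {ω | (M : ℝ) * (1 - ε) ≤ X ω}
      ≤ ENNReal.ofReal (Real.exp (-t * ((M : ℝ) * (1 - ε))) * (1 - p + p * Real.exp t) ^ M) := by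
    rw [ENNReal.le_ofReal_iff_toReal_le (measure_ne_top _ _)
      (mul_nonneg (Real.exp_pos _).le (pow_nonneg hBnn M))]
    rw [← hmgf]
    exact hchern
  refine le_trans hb (ENNReal.ofReal_le_ofReal ?_)
  -- final real arithmetic
  set p0 : ℝ := 1 - ε - εval with hp0def
  have hB0 : 1 - p + p * Real.exp t ≤ 1 - p0 + p0 * Real.exp t := by nlinarith
  have hHoeff : 1 - p0 + p0 * Real.exp t ≤ Real.exp (t * p0 + t ^ 2 / 8) :=
    hoeffding_bernoulli hp0pos.le (by rw [hp0def]; linarith) ht0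
  calc Real.exp (-t * ((M : ℝ) * (1 - ε))) * (1 - p + p * Real.exp t) ^ M
      ≤ Real.exp (-t * ((M : ℝ) * (1 - ε))) * (Real.exp (t * p0 + t ^ 2 / 8)) ^ M := by
        apply mul_le_mul_of_nonneg_left _ (Real.exp_pos _).le
        exact pow_le_pow_left₀ hBnn (le_trans hB0 hHoeff) M
    _ = Real.exp (-t * ((M : ℝ) * (1 - ε)) + (M : ℝ) * (t * p0 + t ^ 2 / 8)) := by
        rw [← Real.exp_nat_mul, ← Real.exp_add]
    _ = Real.exp (-(2 * (M : ℝ) * εval ^ 2)) := by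
        congr 1
        rw [htdef, hp0def]; ring
    _ ≤ α := by
        rw [← Real.exp_log hα0]
        apply Real.exp_le_exp.2
        have h1 : Real.log (1 / α) = - Real.log α := by
          rw [one_div, Real.log_inv]
        have h2 : Real.log (1 / α) ≤ (M : ℝ) * (2 * εval ^ 2) := by
          rw [ge_iff_le, div_le_iff₀ (by positivity)] at hM
          linarith
        nlinarith
end

section
/- Let μ be a probability measure on pairs of real matrices (A, B) with A of size d_x × d_x and B of size d_x × d_u, let C be a measurable set of such pairs with μ(C) = c > 0, and let μ_c denote the conditional measure μ(· | C). Let K be a fixed real d_u × d_x matrix, and call a pair (A, B) stabilized by K if the spectral radius of A + B·K (i.e., the maximum modulus of its complex eigenvalues) is strictly less than 1. Fix ε, ε_val ∈ (0,1) and α ∈ (0,1), and let (A_1,B_1), …, (A_M,B_M) be independent samples from the conditional measure μ_c with M ≥ log(1/α)/(2·ε_val²). If the probability under the full (unconditioned) measure μ that (A, B) is stabilized by K is strictly less than c − (ε + ε_val), then the probability that the empirical stability frequency (1/M)·#{i : (A_i,B_i) is stabilized by K} is at least 1 − ε is at most α. (Equivalently: with probability at least 1 − α over the validation samples, either the controller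 fails validation or the true stabilization probability under μ is at least c − (ε + ε_val).) -/
open MeasureTheory

section Aux

lemma bern_D_pos {p : ℝ} (hp0 : 0 ≤ p) (hp1 : p ≤ 1) (s : ℝ) :
    0 < 1 - p + p * Real.exp s := by
  rcases eq_or_lt_of_le hp1 with h | h
  · subst h; simpa using Real.exp_pos s
  · have := mul_nonneg hp0 (Real.exp_pos s).le
    linarith

lemma bern_mgf_le {p : ℝ} (hp0 : 0 ≤ p) (hp1 : p ≤ 1) {t : ℝ} (ht : 0 ≤ t) :
    1 - p + p * Real.exp t ≤ Real.exp (p * t + t ^ 2 / 8) := by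
  set D : ℝ → ℝ := fun s => 1 - p + p * Real.exp s with hD
  have hDpos : ∀ s, 0 < D s := fun s => bern_D_pos hp0 hp1 s
  set g : ℝ → ℝ := fun s => p + s / 4 - p * Real.exp s / D s with hg
  have hgd : ∀ s, HasDerivAt g (1 / 4 - p * Real.exp s * (1 - p) / (D s) ^ 2) s := by
    intro s
    have hnum : HasDerivAt (fun s => p * Real.exp s) (p * Real.exp s) s :=
      (Real.hasDerivAt_exp s).const_mul p
    have hden : HasDerivAt D (p * Real.exp s) s := by
      exact ((Real.hasDerivAt_exp s).const_mul p).const_add (1 - p)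
    have hquot := hnum.div hden (hDpos s).ne'
    have hlin : HasDerivAt (fun s : ℝ => p + s / 4) (1 / 4) s := by
      simpa using ((hasDerivAt_id s).div_const 4).const_add p
    have := hlin.sub hquot
    refine this.congr_deriv ?_
    have hDs : D s = 1 - p + p * Real.exp s := rfl
    rw [hDs]
    field_simp
    ring
  have hg_deriv_nonneg : ∀ s, 0 ≤ 1 / 4 - p * Real.exp s * (1 - p) / (D s) ^ 2 := by
    intro s
    have h3 : p * Real.exp s * (1 - p) / (D s) ^ 2 ≤ 1 / 4 := by
      rw [div_le_iff₀ (pow_pos (hDpos s) 2)]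
      have hDs : D s = 1 - p + p * Real.exp s := rfl
      rw [hDs]
      nlinarith [sq_nonneg ((1 - p) - p * Real.exp s)]
    linarith
  have hgmono : Monotone g :=
    monotone_of_deriv_nonneg (fun s => (hgd s).differentiableAt)
      (fun s => by rw [(hgd s).deriv]; exact hg_deriv_nonneg s)
  have hg0 : g 0 = 0 := by simp [hg, hD]
  set f : ℝ → ℝ := fun s => p * s + s ^ 2 / 8 - Real.log (D s) with hf
  have hfd : ∀ s, HasDerivAt f (g s) s := by
    intro s
    have hden : HasDerivAt D (p * Real.exp s) s := by
      exact ((Real.hasDerivAt_exp s).const_mul p).const_add (1 - p)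
    have hlog : HasDerivAt (fun s => Real.log (D s)) (p * Real.exp s / D s) s :=
      hden.log (hDpos s).ne'
    have hpoly : HasDerivAt (fun s : ℝ => p * s + s ^ 2 / 8) (p + s / 4) s := by
      have h1 : HasDerivAt (fun s : ℝ => p * s) p s := by
        simpa using (hasDerivAt_id s).const_mul p
      have h2 : HasDerivAt (fun s : ℝ => s ^ 2 / 8) (s / 4) s := by
        have := (hasDerivAt_pow 2 s).div_const 8
        exact this.congr_deriv (by ring)
      exact h1.add h2
    have := hpoly.sub hlog
    exact this
  have hfmono : MonotoneOn f (Set.Ici 0) := by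
    apply monotoneOn_of_deriv_nonneg (convex_Ici 0)
      (fun s _ => (hfd s).differentiableAt.continuousAt.continuousWithinAt)
      (fun s _ => (hfd s).differentiableAt.differentiableWithinAt)
    intro s hs
    rw [(hfd s).deriv]
    have : (0 : ℝ) ≤ s := le_of_lt (by simpa using hs)
    calc (0 : ℝ) = g 0 := hg0.symm
    _ ≤ g s := hgmono this
  have hf0 : f 0 = 0 := by simp [hf, hD]
  have hft : 0 ≤ f t := by
    have := hfmono (Set.self_mem_Ici) (Set.mem_Ici.2 ht) ht
    rw [hf0] at this; exact this
  have hlog : Real.log (D t) ≤ p * t + t ^ 2 / 8 := by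
    simp only [hf] at hft; linarith
  calc D t = Real.exp (Real.log (D t)) := (Real.exp_log (hDpos t)).symm
    _ ≤ Real.exp (p * t + t ^ 2 / 8) := Real.exp_le_exp.2 hlog

variable {M : ℕ} {Ω : Type*} [MeasurableSpace Ω] (ν : Measure Ω) [IsProbabilityMeasure ν]

lemma pi_eval_preimage (i : Fin M) (s : Set Ω) :
    (Measure.pi fun _ : Fin M => ν) ((fun ω : Fin M → Ω => ω i) ⁻¹' s) = ν s := by
  classical
  have h : (fun ω : Fin M → Ω => ω i) ⁻¹' s
      = Set.pi Set.univ (Function.update (fun _ : Fin M => Set.univ) i s) :=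
    Set.eval_preimage
  rw [h, Measure.pi_pi]
  rw [Finset.prod_eq_single i (fun j _ hj => by
      rw [Function.update_of_ne hj]; exact measure_univ) (by simp)]
  rw [Function.update_self]

lemma pi_map_eval (i : Fin M) :
    Measure.map (fun ω : Fin M → Ω => ω i) (Measure.pi fun _ : Fin M => ν) = ν := by
  ext s hs
  rw [Measure.map_apply (measurable_pi_apply i) hs, pi_eval_preimage]

lemma iIndepFun_eval :
    ProbabilityTheory.iIndepFun
      (fun i (ω : Fin M → Ω) => ω i) (Measure.pi fun _ : Fin M => ν) := by
  classical
  rw [ProbabilityTheory.iIndepFun_iff_measure_inter_preimage_eq_mul]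
  intro S sets _
  have h : (⋂ i ∈ S, (fun ω : Fin M → Ω => ω i) ⁻¹' sets i)
      = Set.pi Set.univ (fun i => if i ∈ S then sets i else Set.univ) := by
    ext ω
    simp only [Set.mem_iInter, Set.mem_preimage, Set.mem_pi, Set.mem_univ, true_implies]
    constructor
    · intro hω i
      by_cases hi : i ∈ S <;> simp [hi, hω]
    · intro hω i hi
      have := hω i
      rwa [if_pos hi] at this
  rw [h, Measure.pi_pi]
  rw [show (∏ i : Fin M, ν (if i ∈ S then sets i else Set.univ))
      = ∏ i : Fin M, (if i ∈ S then ν (sets i) else 1) from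
    Finset.prod_congr rfl (fun i _ => by split <;> simp)]
  rw [Finset.prod_ite_mem Finset.univ S (fun i => ν (sets i)), Finset.univ_inter]
  exact Finset.prod_congr rfl fun i _ => (pi_eval_preimage ν i (sets i)).symm

end Aux

/-- A-posteriori validation guarantee (Theorem 2 of the paper), contrapositive form:
sampling `M ≥ log(1/α)/(2 ε_val²)` i.i.d. validation scenarios from the conditional
(truncated) measure `μ(·|C)`, where `μ C = c > 0`; if the probability under the full
measure `μ` that `(A,B)` is stabilized by `K` is less than `c - (ε + ε_val)`, then the
probability that the empirical stability frequency over the validation samples is at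
least `1 - ε` (i.e. that `K` passes validation) is at most `α`. -/
theorem truncated_validation_guarantee {dx du : ℕ}
    (μ : Measure (Matrix (Fin dx) (Fin dx) ℝ × Matrix (Fin dx) (Fin du) ℝ))
    [IsProbabilityMeasure μ]
    (C : Set (Matrix (Fin dx) (Fin dx) ℝ × Matrix (Fin dx) (Fin du) ℝ))
    (hCmeas : MeasurableSet C)
    (c : ℝ) (hc : 0 < c) (hμC : μ C = ENNReal.ofReal c)
    (K : Matrix (Fin du) (Fin dx) ℝ)
    (ε εval α : ℝ)
    (hε : ε ∈ Set.Ioo (0 : ℝ) 1) (hεval : εval ∈ Set.Ioo (0 : ℝ) 1)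
    (hα : α ∈ Set.Ioo (0 : ℝ) 1)
    (M : ℕ)
    (hM : (M : ℝ) ≥ Real.log (1 / α) / (2 * εval ^ 2))
    (hp : μ {S | StabilizedBy K S} < ENNReal.ofReal (c - (ε + εval))) :
    (Measure.pi fun _ : Fin M => ProbabilityTheory.cond μ C)
      {ω | (1 - ε : ℝ) ≤ (Nat.card {i : Fin M // StabilizedBy K (ω i)} : ℝ) / M}
      ≤ ENNReal.ofReal α := by
  classical
  set ν := ProbabilityTheory.cond μ C with hν
  have hμCne : μ C ≠ 0 := by rw [hμC]; exact (ENNReal.ofReal_pos.2 hc).ne'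
  have hνprob : IsProbabilityMeasure ν := ProbabilityTheory.cond_isProbabilityMeasure hμCne
  set π := (Measure.pi fun _ : Fin M => ν) with hπ
  set E : Set (Matrix (Fin dx) (Fin dx) ℝ × Matrix (Fin dx) (Fin du) ℝ) :=
    {S | StabilizedBy K S} with hE
  obtain ⟨E', hEE', hE'meas, hE'eq⟩ := exists_measurable_superset μ E
  -- scalar facts
  have hc1 : c ≤ 1 := by
    have h1 : μ C ≤ 1 := prob_le_one
    rw [hμC] at h1
    exact ENNReal.ofReal_le_one.mp h1
  have hlt : ε + εval < c := by
    by_contra h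
    push_neg at h
    rw [ENNReal.ofReal_eq_zero.2 (by linarith)] at hp
    exact absurd hp (by simp)
  have hlogα : 0 < Real.log (1 / α) := Real.log_pos (one_lt_one_div hα.1 hα.2)
  have hM0 : 0 < (M : ℝ) :=
    lt_of_lt_of_le (div_pos hlogα (by nlinarith [hεval.1])) hM
  -- the success probability p under the truncated measure
  have hνE'le : ν E' ≤ ENNReal.ofReal ((c - (ε + εval)) / c) := by
    rw [hν, ProbabilityTheory.cond_apply hCmeas]
    calc (μ C)⁻¹ * μ (C ∩ E') ≤ (μ C)⁻¹ * μ E' := by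
          gcongr
          exact Set.inter_subset_right
    _ ≤ (ENNReal.ofReal c)⁻¹ * ENNReal.ofReal (c - (ε + εval)) := by
          rw [hμC, hE'eq]
          gcongr
    _ = ENNReal.ofReal ((c - (ε + εval)) / c) := by
          rw [ENNReal.ofReal_div_of_pos hc, div_eq_mul_inv, mul_comm]
  set p : ℝ := (ν E').toReal with hpdef
  have hp0 : 0 ≤ p := ENNReal.toReal_nonneg
  have hpbound : p ≤ 1 - (ε + εval) := by
    have h1 : p ≤ (c - (ε + εval)) / c := by
      have h2 := ENNReal.toReal_mono ENNReal.ofReal_ne_top hνE'le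
      rwa [ENNReal.toReal_ofReal (div_nonneg (by linarith) hc.le)] at h2
    have h3 : (c - (ε + εval)) / c ≤ 1 - (ε + εval) := by
      rw [div_le_iff₀ hc]
      nlinarith [hε.1, hεval.1]
    linarith
  have hp1 : p ≤ 1 := by nlinarith [hε.1, hεval.1]
  have hind01 : ∀ x, 0 ≤ E'.indicator (fun _ => (1 : ℝ)) x ∧
      E'.indicator (fun _ => (1 : ℝ)) x ≤ 1 := by
    intro x
    by_cases h : x ∈ E' <;> simp [h]
  -- the random variables
  set X : Fin M → ((Fin M → Matrix (Fin dx) (Fin dx) ℝ × Matrix (Fin dx) (Fin du) ℝ) → ℝ) :=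
    fun i ω => E'.indicator (fun _ => (1 : ℝ)) (ω i) - p with hX
  have hXmeas : ∀ i, Measurable (X i) := fun i =>
    ((measurable_const.indicator hE'meas).comp (measurable_pi_apply i)).sub measurable_const
  have hindep : ProbabilityTheory.iIndepFun X π := by
    have h := (iIndepFun_eval (M := M) ν).comp
      (fun _ x => E'.indicator (fun _ => (1 : ℝ)) x - p)
      (fun _ => (measurable_const.indicator hE'meas).sub measurable_const)
    exact h
  set t : ℝ := 4 * εval with ht_def
  have ht : 0 ≤ t := by nlinarith [hεval.1]
  -- single mgf bound
  have hmgf_single : ∀ i, ProbabilityTheory.mgf (X i) π t ≤ Real.exp (t ^ 2 / 8) := by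
    intro i
    have hmeasg : Measurable fun x : Matrix (Fin dx) (Fin dx) ℝ × Matrix (Fin dx) (Fin du) ℝ =>
        Real.exp (t * (E'.indicator (fun _ => (1 : ℝ)) x - p)) :=
      (((measurable_const.indicator hE'meas).sub measurable_const).const_mul t).exp
    have hmap : ∫ x, Real.exp (t * (E'.indicator (fun _ => (1 : ℝ)) x - p)) ∂ν
        = ProbabilityTheory.mgf (X i) π t := by
      rw [← pi_map_eval (M := M) ν i,
        integral_map (measurable_pi_apply i).aemeasurable hmeasg.aestronglyMeasurable]
      rfl
    rw [← hmap]
    set q := Real.exp (t * (1 - p)) with hq_def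
    set r := Real.exp (t * (0 - p)) with hr_def
    have hfun : (fun x => Real.exp (t * (E'.indicator (fun _ => (1 : ℝ)) x - p)))
        = fun x => E'.indicator (fun _ => q - r) x + r := by
      funext x
      by_cases hx : x ∈ E' <;>
        simp [Set.indicator_of_mem, Set.indicator_of_notMem, hx, hq_def, hr_def]
    rw [hfun, integral_add ((integrable_const _).indicator hE'meas) (integrable_const r),
      integral_indicator_const _ hE'meas, integral_const]
    simp only [measureReal_def, measure_univ, ENNReal.toReal_one, smul_eq_mul, one_mul, ← hpdef]
    have hq : q = Real.exp t * Real.exp (-(t * p)) := by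
      rw [hq_def, ← Real.exp_add]; ring_nf
    have hr : r = Real.exp (-(t * p)) := by
      rw [hr_def]; ring_nf
    have key := bern_mgf_le hp0 hp1 ht
    calc p * (q - r) + r = Real.exp (-(t * p)) * (1 - p + p * Real.exp t) := by
          rw [hq, hr]; ring
    _ ≤ Real.exp (-(t * p)) * Real.exp (p * t + t ^ 2 / 8) :=
          mul_le_mul_of_nonneg_left key (Real.exp_pos _).le
    _ = Real.exp (t ^ 2 / 8) := by rw [← Real.exp_add]; ring_nf
  -- mgf of the sum
  have hmgf_sum : ProbabilityTheory.mgf (∑ i, X i) π t ≤ Real.exp (M * (t ^ 2 / 8)) := by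
    rw [hindep.mgf_sum hXmeas Finset.univ]
    calc ∏ i, ProbabilityTheory.mgf (X i) π t
        ≤ ∏ _i : Fin M, Real.exp (t ^ 2 / 8) :=
          Finset.prod_le_prod (fun i _ => ProbabilityTheory.mgf_nonneg)
            (fun i _ => hmgf_single i)
    _ = Real.exp (M * (t ^ 2 / 8)) := by
          rw [Finset.prod_const, Finset.card_univ, Fintype.card_fin, ← Real.exp_nat_mul]
  have hsum_eq : (∑ i, X i) = fun ω => ∑ i, X i ω := by
    funext ω; exact Finset.sum_apply ω Finset.univ X
  have hZmeas : Measurable (∑ i, X i) := by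
    rw [hsum_eq]; exact Finset.measurable_sum _ fun i _ => hXmeas i
  have hint : Integrable (fun ω => Real.exp (t * (∑ i, X i) ω)) π := by
    refine Integrable.mono' (integrable_const (Real.exp (t * M)))
      ((hZmeas.const_mul t).exp.aestronglyMeasurable) (ae_of_all _ fun ω => ?_)
    rw [Real.norm_eq_abs, abs_of_pos (Real.exp_pos _)]
    refine Real.exp_le_exp.2 (mul_le_mul_of_nonneg_left ?_ ht)
    rw [Finset.sum_apply]
    calc ∑ i, X i ω ≤ ∑ _i : Fin M, (1 : ℝ) :=
        Finset.sum_le_sum fun i _ => by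
          have := hind01 (ω i)
          simp only [hX]
          linarith [this.2]
    _ = M := by simp
  -- Chernoff
  have hcher := ProbabilityTheory.measure_ge_le_exp_mul_mgf (μ := π) (X := ∑ i, X i)
    ((M : ℝ) * εval) ht hint
  have hexp_le : Real.exp (-t * ((M : ℝ) * εval)) * ProbabilityTheory.mgf (∑ i, X i) π t
      ≤ α := by
    calc Real.exp (-t * ((M : ℝ) * εval)) * ProbabilityTheory.mgf (∑ i, X i) π t
        ≤ Real.exp (-t * ((M : ℝ) * εval)) * Real.exp (M * (t ^ 2 / 8)) :=
          mul_le_mul_of_nonneg_left hmgf_sum (Real.exp_pos _).le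
    _ = Real.exp (-(2 * M * εval ^ 2)) := by
          rw [← Real.exp_add]; congr 1; rw [ht_def]; ring
    _ ≤ α := by
          have hlog : Real.log (1 / α) = -Real.log α := by rw [one_div, Real.log_inv]
          have h2 : Real.log (1 / α) ≤ (M : ℝ) * (2 * εval ^ 2) := by
            have hM' : Real.log (1 / α) / (2 * εval ^ 2) ≤ (M : ℝ) := hM
            rw [div_le_iff₀ (by nlinarith [hεval.1] : (0:ℝ) < 2 * εval ^ 2)] at hM'
            linarith
          have h3 : -(2 * M * εval ^ 2) ≤ Real.log α := by
            rw [hlog] at h2; linarith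
          calc Real.exp (-(2 * M * εval ^ 2)) ≤ Real.exp (Real.log α) := Real.exp_le_exp.2 h3
          _ = α := Real.exp_log hα.1
  have hbound : (π {ω | (M : ℝ) * εval ≤ (∑ i, X i) ω}).toReal ≤ α := hcher.trans hexp_le
  -- event inclusion
  have hsub : {ω : Fin M → Matrix (Fin dx) (Fin dx) ℝ × Matrix (Fin dx) (Fin du) ℝ |
        (1 - ε : ℝ) ≤ (Nat.card {i : Fin M // StabilizedBy K (ω i)} : ℝ) / M}
      ⊆ {ω | (M : ℝ) * εval ≤ (∑ i, X i) ω} := by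
    intro ω hω
    simp only [Set.mem_setOf_eq] at hω ⊢
    rw [Finset.sum_apply]
    have hN : ((Finset.univ.filter (fun i => StabilizedBy K (ω i))).card : ℝ)
        = (Nat.card {i : Fin M // StabilizedBy K (ω i)} : ℝ) := by
      rw [Nat.card_eq_fintype_card, Fintype.card_subtype]
    have hsumind : ∑ i, E'.indicator (fun _ => (1 : ℝ)) (ω i)
        = ((Finset.univ.filter (fun i => ω i ∈ E')).card : ℝ) := by
      simp only [Set.indicator_apply]
      rw [Finset.sum_boole]
    have hcardle : ((Finset.univ.filter (fun i => StabilizedBy K (ω i))).card : ℝ)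
        ≤ ((Finset.univ.filter (fun i => ω i ∈ E')).card : ℝ) := by
      have : (Finset.univ.filter (fun i => StabilizedBy K (ω i)))
          ⊆ (Finset.univ.filter (fun i => ω i ∈ E')) :=
        Finset.monotone_filter_right _ (fun i _ hi => hEE' hi)
      exact_mod_cast Finset.card_le_card this
    have hNge : (M : ℝ) * (1 - ε) ≤ (Nat.card {i : Fin M // StabilizedBy K (ω i)} : ℝ) := by
      have := (le_div_iff₀ hM0).mp hω
      linarith [this]
    have hsum : ∑ i, X i ω = (∑ i, E'.indicator (fun _ => (1 : ℝ)) (ω i)) - M * p := by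
      simp only [hX]
      rw [Finset.sum_sub_distrib, Finset.sum_const, Finset.card_univ, Fintype.card_fin]
      ring
    rw [hsum, hsumind]
    have h5 : (M : ℝ) * (1 - ε) ≤ ((Finset.univ.filter (fun i => ω i ∈ E')).card : ℝ) := by
      rw [hN] at hcardle; linarith
    nlinarith [hpbound, hM0]
  refine le_trans (measure_mono hsub) ?_
  rw [← ENNReal.ofReal_toReal (measure_ne_top π {ω | (M : ℝ) * εval ≤ (∑ i, X i) ω})]
  exact ENNReal.ofReal_le_ofReal hbound
end

section
/- Let ε ∈ (0,1), β ∈ (0,1), and let n ≥ 1 be a natural number. If the natural number M satisfies M ≥ (2/ε)·(n − 1 + log(1/β)), then the binomial tail satisfies Σ_{i=0}^{n−1} (M choose i) · εⁱ · (1 − ε)^{M−i} ≤ β. -/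
lemma sum_choose_pow_le (x y : ℝ) (hx : 0 ≤ x) (hy : 0 ≤ y) (n M : ℕ) :
    ∑ i ∈ Finset.range n, (M.choose i : ℝ) * x ^ i * y ^ (M - i) ≤ (x + y) ^ M := by
  have hnonneg : ∀ i ∈ Finset.range (max n (M + 1)),
      0 ≤ (M.choose i : ℝ) * x ^ i * y ^ (M - i) := by
    intro i _
    positivity
  have h1 : ∑ i ∈ Finset.range n, (M.choose i : ℝ) * x ^ i * y ^ (M - i)
      ≤ ∑ i ∈ Finset.range (max n (M + 1)), (M.choose i : ℝ) * x ^ i * y ^ (M - i) := by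
    apply Finset.sum_le_sum_of_subset_of_nonneg
    · exact Finset.range_subset_range.mpr (le_max_left _ _)
    · intro i hi _; exact hnonneg i hi
  have h2 : ∑ i ∈ Finset.range (max n (M + 1)), (M.choose i : ℝ) * x ^ i * y ^ (M - i)
      = ∑ i ∈ Finset.range (M + 1), (M.choose i : ℝ) * x ^ i * y ^ (M - i) := by
    symm
    apply Finset.sum_subset (Finset.range_subset_range.mpr (le_max_right _ _))
    intro i _ hi
    have : M < i := by
      simpa using Nat.lt_of_lt_of_le (Nat.lt_of_not_le (by simpa using hi)) (le_refl _)
    rw [Nat.choose_eq_zero_of_lt this]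
    simp
  have h3 : (x + y) ^ M = ∑ i ∈ Finset.range (M + 1), (M.choose i : ℝ) * x ^ i * y ^ (M - i) := by
    rw [add_pow]
    apply Finset.sum_congr rfl
    intro i _
    ring
  rw [h3]
  calc ∑ i ∈ Finset.range n, (M.choose i : ℝ) * x ^ i * y ^ (M - i)
      ≤ _ := h1
    _ = _ := h2

/-- Explicit sample-size bound for the scenario approach: for `ε, β ∈ (0,1)` and `n ≥ 1`,
if the natural number `M` satisfies `M ≥ (2/ε)·(n - 1 + log(1/β))`, then the binomial tail
`∑_{i=0}^{n-1} (M choose i) εⁱ (1-ε)^{M-i}` is at most `β`. -/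
theorem scenario_sample_size_binomial_tail
    (ε β : ℝ) (hε : ε ∈ Set.Ioo (0 : ℝ) 1) (hβ : β ∈ Set.Ioo (0 : ℝ) 1)
    (n : ℕ) (hn : 1 ≤ n) (M : ℕ)
    (hM : (M : ℝ) ≥ (2 / ε) * ((n : ℝ) - 1 + Real.log (1 / β))) :
    ∑ i ∈ Finset.range n, (M.choose i : ℝ) * ε ^ i * (1 - ε) ^ (M - i) ≤ β := by
  obtain ⟨hε0, hε1⟩ := hε
  obtain ⟨hβ0, hβ1⟩ := hβ
  have h1ε : (0:ℝ) ≤ 1 - ε := by linarith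
  have hhalf : (0:ℝ) ≤ ε / 2 := by linarith
  -- Step 1: termwise bound and binomial theorem
  have step1 : ∑ i ∈ Finset.range n, (M.choose i : ℝ) * ε ^ i * (1 - ε) ^ (M - i)
      ≤ 2 ^ (n - 1) * (1 - ε / 2) ^ M := by
    have hterm : ∀ i ∈ Finset.range n,
        (M.choose i : ℝ) * ε ^ i * (1 - ε) ^ (M - i)
          ≤ 2 ^ (n - 1) * ((M.choose i : ℝ) * (ε / 2) ^ i * (1 - ε) ^ (M - i)) := by
      intro i hi
      have hi' : i ≤ n - 1 := Nat.le_sub_one_of_lt (Finset.mem_range.mp hi)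
      have h2 : (2:ℝ) ^ i ≤ 2 ^ (n - 1) := pow_le_pow_right₀ one_le_two hi'
      have hε2 : ε ^ i = 2 ^ i * (ε / 2) ^ i := by
        rw [← mul_pow]; ring_nf
      have hle : ε ^ i ≤ 2 ^ (n - 1) * (ε / 2) ^ i := by
        rw [hε2]
        exact mul_le_mul_of_nonneg_right h2 (by positivity)
      calc (M.choose i : ℝ) * ε ^ i * (1 - ε) ^ (M - i)
          ≤ (M.choose i : ℝ) * (2 ^ (n - 1) * (ε / 2) ^ i) * (1 - ε) ^ (M - i) := by
            apply mul_le_mul_of_nonneg_right _ (by positivity)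
            exact mul_le_mul_of_nonneg_left hle (by positivity)
        _ = 2 ^ (n - 1) * ((M.choose i : ℝ) * (ε / 2) ^ i * (1 - ε) ^ (M - i)) := by ring
    calc ∑ i ∈ Finset.range n, (M.choose i : ℝ) * ε ^ i * (1 - ε) ^ (M - i)
        ≤ ∑ i ∈ Finset.range n,
            2 ^ (n - 1) * ((M.choose i : ℝ) * (ε / 2) ^ i * (1 - ε) ^ (M - i)) :=
          Finset.sum_le_sum hterm
      _ = 2 ^ (n - 1) * ∑ i ∈ Finset.range n,
            (M.choose i : ℝ) * (ε / 2) ^ i * (1 - ε) ^ (M - i) := by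
          rw [Finset.mul_sum]
      _ ≤ 2 ^ (n - 1) * (ε / 2 + (1 - ε)) ^ M := by
          apply mul_le_mul_of_nonneg_left _ (by positivity)
          exact sum_choose_pow_le _ _ hhalf h1ε n M
      _ = 2 ^ (n - 1) * (1 - ε / 2) ^ M := by ring_nf
  -- Step 2: (1 - ε/2)^M ≤ exp (-(ε/2) * M)
  have step2 : (1 - ε / 2) ^ M ≤ Real.exp (-(ε / 2) * M) := by
    have hb : 1 - ε / 2 ≤ Real.exp (-(ε / 2)) := by
      have := Real.add_one_le_exp (-(ε / 2))
      linarith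
    calc (1 - ε / 2) ^ M ≤ (Real.exp (-(ε / 2))) ^ M :=
          pow_le_pow_left₀ (by linarith) hb M
      _ = Real.exp (-(ε / 2) * M) := by
          rw [← Real.exp_nat_mul]; ring_nf
  -- Step 3: exponent bound
  have hexp : Real.exp (-(ε / 2) * M) ≤ Real.exp (-((n:ℝ) - 1)) * β := by
    have hεM : (ε / 2) * M ≥ (n:ℝ) - 1 + Real.log (1 / β) := by
      have h := mul_le_mul_of_nonneg_left hM hhalf
      have heq : ε / 2 * (2 / ε * ((n:ℝ) - 1 + Real.log (1 / β)))
          = (n:ℝ) - 1 + Real.log (1 / β) := by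
        field_simp
      linarith [h, heq]
    have : -(ε / 2) * M ≤ -((n:ℝ) - 1) - Real.log (1 / β) := by linarith
    calc Real.exp (-(ε / 2) * M) ≤ Real.exp (-((n:ℝ) - 1) - Real.log (1 / β)) :=
          Real.exp_le_exp.mpr this
      _ = Real.exp (-((n:ℝ) - 1)) * β := by
          rw [Real.exp_sub, Real.log_div one_ne_zero (ne_of_gt hβ0), Real.log_one]
          rw [show (0:ℝ) - Real.log β = -Real.log β from by ring, Real.exp_neg, Real.exp_neg,
            Real.exp_log hβ0]
          field_simp
  -- Step 4: 2^(n-1) * exp(-(n-1)) ≤ 1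
  have step4 : (2:ℝ) ^ (n - 1) * Real.exp (-((n:ℝ) - 1)) ≤ 1 := by
    have hcast : ((n - 1 : ℕ) : ℝ) = (n:ℝ) - 1 := by
      rw [Nat.cast_sub hn]; simp
    have h2e : (2:ℝ) ^ (n - 1) ≤ Real.exp ((n:ℝ) - 1) := by
      rw [← hcast]
      calc (2:ℝ) ^ (n - 1) ≤ (Real.exp 1) ^ (n - 1) :=
            pow_le_pow_left₀ (by norm_num) (by
              have := Real.add_one_le_exp (1:ℝ); linarith) _
        _ = Real.exp ((n - 1 : ℕ) : ℝ) := by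
            rw [← Real.exp_nat_mul, mul_one]
    calc (2:ℝ) ^ (n - 1) * Real.exp (-((n:ℝ) - 1))
        ≤ Real.exp ((n:ℝ) - 1) * Real.exp (-((n:ℝ) - 1)) :=
          mul_le_mul_of_nonneg_right h2e (le_of_lt (Real.exp_pos _))
      _ = 1 := by rw [← Real.exp_add]; ring_nf; exact Real.exp_zero
  calc ∑ i ∈ Finset.range n, (M.choose i : ℝ) * ε ^ i * (1 - ε) ^ (M - i)
      ≤ 2 ^ (n - 1) * (1 - ε / 2) ^ M := step1
    _ ≤ 2 ^ (n - 1) * Real.exp (-(ε / 2) * M) :=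
        mul_le_mul_of_nonneg_left step2 (by positivity)
    _ ≤ 2 ^ (n - 1) * (Real.exp (-((n:ℝ) - 1)) * β) :=
        mul_le_mul_of_nonneg_left hexp (by positivity)
    _ = (2 ^ (n - 1) * Real.exp (-((n:ℝ) - 1))) * β := by ring
    _ ≤ 1 * β := mul_le_mul_of_nonneg_right step4 (le_of_lt hβ0)
    _ = β := one_mul β
end
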